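/- Let U ⊆ ℝᵐ be a compact set, T > 0, T_f ⊆ ℝⁿ a nonempty set, and let f, g : ℝⁿ × ℝᵐ → ℝⁿ be continuous maps that are both L-Lipschitz in their first argument uniformly in the second (L > 0), and satisfy ‖f(x,u) − g(x,u)‖ ≤ ε for all x ∈ ℝⁿ, u ∈ U. For a dynamic F ∈ {f, g}, define the controllable domain in time ≤ T as C_F = {x₀ ∈ ℝⁿ : ∃ T' ∈ [0,T], ∃ measurable u : ℝ → U, ∃ continuous X : [0,T'] → ℝⁿ with X(t) = x₀ + ∫₀ᵗ F(X(s), u(s)) ds for all t ∈ [0,T'] and X(T') ∈ T_f}. Then the Hausdorff distance between C_f and C_g is at most (ε/L)(e^{LT} − 1). -/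

import Mathlib

open MeasureTheory

/-- The controllable domain in time at most `T` to the target `Tf`, for the controlled
dynamic `F` with controls taking values in `U`: the set of initial points `x₀` from which
some trajectory `X(t) = x₀ + ∫₀ᵗ F(X(s), u(s)) ds`, driven by a measurable control `u`
with values in `U`, reaches `Tf` at some time `T' ∈ [0, T]`. -/
def ctrlDomainWithin (n m : ℕ) (U : Set (EuclideanSpace ℝ (Fin m))) (T : ℝ)
    (Tf : Set (EuclideanSpace ℝ (Fin n)))
    (F : EuclideanSpace ℝ (Fin n) → EuclideanSpace ℝ (Fin m) → EuclideanSpace ℝ (Fin n)) :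
    Set (EuclideanSpace ℝ (Fin n)) :=
  {x₀ | ∃ T' ∈ Set.Icc (0 : ℝ) T, ∃ u : ℝ → EuclideanSpace ℝ (Fin m),
    Measurable u ∧ (∀ s, u s ∈ U) ∧
    ∃ X : ℝ → EuclideanSpace ℝ (Fin n), ContinuousOn X (Set.Icc 0 T') ∧
      (∀ t ∈ Set.Icc (0 : ℝ) T', X t = x₀ + ∫ s in (0 : ℝ)..t, F (X s) (u s)) ∧
      X T' ∈ Tf}

set_option maxHeartbeats 1600000 in
open Set intervalIntegral Filter Topology in
private lemma exists_close_mem_ctrlDomain {n m : ℕ} (U : Set (EuclideanSpace ℝ (Fin m)))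
    (hU : IsCompact U) (T L ε : ℝ) (hL : 0 < L) (hε : 0 ≤ ε)
    (Tf : Set (EuclideanSpace ℝ (Fin n)))
    (f g : EuclideanSpace ℝ (Fin n) → EuclideanSpace ℝ (Fin m) → EuclideanSpace ℝ (Fin n))
    (hfc : Continuous fun p : EuclideanSpace ℝ (Fin n) × EuclideanSpace ℝ (Fin m) => f p.1 p.2)
    (hgc : Continuous fun p : EuclideanSpace ℝ (Fin n) × EuclideanSpace ℝ (Fin m) => g p.1 p.2)
    (hgLip : ∀ (x y : EuclideanSpace ℝ (Fin n)) (v : EuclideanSpace ℝ (Fin m)),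
      ‖g x v - g y v‖ ≤ L * ‖x - y‖)
    (hfg : ∀ (x : EuclideanSpace ℝ (Fin n)), ∀ v ∈ U, ‖f x v - g x v‖ ≤ ε)
    (x₀ : EuclideanSpace ℝ (Fin n)) (hx₀ : x₀ ∈ ctrlDomainWithin n m U T Tf f) :
    ∃ y₀ ∈ ctrlDomainWithin n m U T Tf g, dist x₀ y₀ ≤ ε / L * (Real.exp (L * T) - 1) := by
  classical
  obtain ⟨T', hT'mem, u, hu, huU, X, hXc, hXeq, hXTf⟩ := hx₀
  have hT'0 : (0:ℝ) ≤ T' := hT'mem.1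
  have h0mem : (0:ℝ) ∈ Icc (0:ℝ) T' := ⟨le_refl _, hT'0⟩
  -- integrability of compositions
  have intF : ∀ (F : EuclideanSpace ℝ (Fin n) → EuclideanSpace ℝ (Fin m) → EuclideanSpace ℝ (Fin n)), Continuous (fun p : EuclideanSpace ℝ (Fin n) × EuclideanSpace ℝ (Fin m) => F p.1 p.2) →
      ∀ (Z : ℝ → EuclideanSpace ℝ (Fin n)), Continuous Z → ∀ a b : ℝ,
      IntervalIntegrable (fun s => F (Z s) (u s)) volume a b := by
    intro F hFc Z hZ a b
    have hmeas : Measurable fun s => F (Z s) (u s) :=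
      hFc.measurable.comp (hZ.measurable.prodMk hu)
    obtain ⟨C, hC⟩ := (((isCompact_uIcc (a := a) (b := b)).image hZ).prod hU).exists_bound_of_continuousOn
      hFc.continuousOn
    rw [intervalIntegrable_iff]
    refine MeasureTheory.Integrable.mono' (g := fun _ => C)
      (integrableOn_const (s := uIoc a b) (C := C) measure_Ioc_lt_top.ne) hmeas.aestronglyMeasurable ?_
    filter_upwards [ae_restrict_mem measurableSet_uIoc] with s hs
    exact hC (Z s, u s) ⟨⟨s, uIoc_subset_uIcc hs, rfl⟩, huU s⟩
  set c : EuclideanSpace ℝ (Fin n) := X T' with hc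
  haveI : Nonempty C(Icc (0:ℝ) T', EuclideanSpace ℝ (Fin n)) := ⟨⟨fun _ => c, continuous_const⟩⟩
  have extCont : ∀ Y : C(Icc (0:ℝ) T', EuclideanSpace ℝ (Fin n)), Continuous (IccExtend hT'0 Y) :=
    fun Y => Y.continuous.Icc_extend'
  set Φ : C(Icc (0:ℝ) T', EuclideanSpace ℝ (Fin n)) → C(Icc (0:ℝ) T', EuclideanSpace ℝ (Fin n)) := fun Y =>
    ⟨fun t => c + ∫ s in T'..(t:ℝ), g (IccExtend hT'0 Y s) (u s),
      continuous_const.add ((intervalIntegral.continuous_primitive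
        (intF g hgc (IccExtend hT'0 Y) (extCont Y)) T').comp continuous_subtype_val)⟩ with hΦ
  have step : ∀ (A B : C(Icc (0:ℝ) T', EuclideanSpace ℝ (Fin n))) (j : ℕ) (C : ℝ), 0 ≤ C →
      (∀ s : Icc (0:ℝ) T', ‖A s - B s‖ ≤ C * (T' - (s:ℝ)) ^ j / (Nat.factorial j : ℝ)) →
      ∀ t : Icc (0:ℝ) T', ‖Φ A t - Φ B t‖ ≤
        C * L * (T' - (t:ℝ)) ^ (j+1) / (Nat.factorial (j+1) : ℝ) := by
    intro A B j C hC hAB t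
    have ht : (t:ℝ) ≤ T' := t.2.2
    have h0t : (0:ℝ) ≤ (t:ℝ) := t.2.1
    have heq : Φ A t - Φ B t =
        ∫ s in (T':ℝ)..(t:ℝ), (g (IccExtend hT'0 A s) (u s) - g (IccExtend hT'0 B s) (u s)) := by
      simp only [hΦ, ContinuousMap.coe_mk]
      rw [integral_sub (intF g hgc _ (extCont A) _ _)
        (intF g hgc _ (extCont B) _ _)]
      abel
    rw [heq, integral_symm (t:ℝ) T', norm_neg]
    have hbound : ‖∫ s in (t:ℝ)..T',
        (g (IccExtend hT'0 A s) (u s) - g (IccExtend hT'0 B s) (u s))‖ ≤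
        |∫ s in (t:ℝ)..T', L * C / (Nat.factorial j : ℝ) * (T' - s) ^ j| := by
      refine norm_integral_le_abs_of_norm_le ?_
        (Continuous.intervalIntegrable (by continuity) _ _)
      filter_upwards [ae_restrict_mem measurableSet_uIoc] with s hs
      rw [uIoc_of_le ht] at hs
      have hs' : s ∈ Icc (0: ℝ) T' := ⟨le_trans h0t hs.1.le, hs.2⟩
      rw [IccExtend_of_mem hT'0 A hs', IccExtend_of_mem hT'0 B hs']
      calc ‖g (A ⟨s, hs'⟩) (u s) - g (B ⟨s, hs'⟩) (u s)‖ ≤ L * ‖A ⟨s, hs'⟩ - B ⟨s, hs'⟩‖ :=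
            hgLip _ _ _
        _ ≤ L * (C * (T' - s) ^ j / (Nat.factorial j : ℝ)) := by
            have := hAB ⟨s, hs'⟩
            exact mul_le_mul_of_nonneg_left this hL.le
        _ = L * C / (Nat.factorial j : ℝ) * (T' - s) ^ j := by ring
    refine hbound.trans ?_
    have hfac : (Nat.factorial (j+1) : ℝ) = ((j:ℝ)+1) * (Nat.factorial j : ℝ) := by
      rw [Nat.factorial_succ]; push_cast; ring
    rw [intervalIntegral.integral_const_mul, integral_comp_sub_left (fun x => x ^ j) T', sub_self, integral_pow,
      zero_pow (by omega : j + 1 ≠ 0), sub_zero, hfac]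
    have hTt : (0:ℝ) ≤ T' - (t:ℝ) := sub_nonneg.2 ht
    have hjf : (0:ℝ) < (Nat.factorial j : ℝ) := by positivity
    have hj1 : (0:ℝ) < (j:ℝ) + 1 := by positivity
    rw [abs_of_nonneg (by
      apply mul_nonneg (div_nonneg (mul_nonneg hL.le hC) hjf.le)
      exact div_nonneg (pow_nonneg hTt _) hj1.le)]
    have heq2 : L * C / (Nat.factorial j : ℝ) * ((T' - (t:ℝ)) ^ (j+1) / ((j:ℝ)+1)) =
        C * L * (T' - (t:ℝ)) ^ (j+1) / (((j:ℝ)+1) * (Nat.factorial j : ℝ)) := by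
      field_simp
    rw [heq2]
  -- iterated contraction bound
  have iter : ∀ (k : ℕ) (A B : C(Icc (0:ℝ) T', EuclideanSpace ℝ (Fin n))) (t : Icc (0:ℝ) T'),
      ‖(Φ^[k] A) t - (Φ^[k] B) t‖ ≤ dist A B * L ^ k * (T' - (t:ℝ)) ^ k / (Nat.factorial k : ℝ) := by
    intro k
    induction k with
    | zero =>
      intro A B t
      simpa [dist_eq_norm] using ContinuousMap.dist_apply_le_dist (f := A) (g := B) t
    | succ k ih =>
      intro A B t
      rw [Function.iterate_succ_apply' Φ k A, Function.iterate_succ_apply' Φ k B]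
      have h := step (Φ^[k] A) (Φ^[k] B) k (dist A B * L ^ k) (by positivity)
        (fun s => ih A B s) t
      calc ‖Φ (Φ^[k] A) t - Φ (Φ^[k] B) t‖ ≤
          dist A B * L ^ k * L * (T' - (t:ℝ)) ^ (k+1) / (Nat.factorial (k+1) : ℝ) := h
        _ = dist A B * L ^ (k+1) * (T' - (t:ℝ)) ^ (k+1) / (Nat.factorial (k+1) : ℝ) := by
            rw [pow_succ]; ring
  have dist_iter : ∀ (k : ℕ) (A B : C(Icc (0:ℝ) T', EuclideanSpace ℝ (Fin n))),
      dist (Φ^[k] A) (Φ^[k] B) ≤ (L * T') ^ k / (Nat.factorial k : ℝ) * dist A B := by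
    intro k A B
    have hd0 : (0:ℝ) ≤ dist A B := dist_nonneg
    rw [ContinuousMap.dist_le (by positivity)]
    intro t
    have hTt : (0:ℝ) ≤ T' - (t:ℝ) := sub_nonneg.2 t.2.2
    have hmono : (T' - (t:ℝ)) ^ k ≤ T' ^ k := pow_le_pow_left₀ hTt (by linarith [t.2.1]) k
    rw [dist_eq_norm]
    refine (iter k A B t).trans ?_
    rw [mul_pow]
    have h2 : dist A B * L ^ k * (T' - (t:ℝ)) ^ k / (Nat.factorial k : ℝ) ≤
        dist A B * L ^ k * T' ^ k / (Nat.factorial k : ℝ) := by gcongr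
    refine h2.trans (le_of_eq (by ring))
  obtain ⟨N, hN⟩ : ∃ N : ℕ, (L * T') ^ N / (Nat.factorial N : ℝ) < 1 := by
    have h := FloorSemiring.tendsto_pow_div_factorial_atTop (L * T')
    exact (h.eventually (gt_mem_nhds one_pos)).exists
  set K : NNReal := ⟨(L * T') ^ N / (Nat.factorial N : ℝ), by positivity⟩ with hK
  have hΦN : ContractingWith K (Φ^[N]) := by
    constructor
    · rw [← NNReal.coe_lt_coe]
      exact hN
    · apply LipschitzWith.of_dist_le_mul
      intro A B
      exact dist_iter N A B
  haveI : Nonempty C(Icc (0:ℝ) T', EuclideanSpace ℝ (Fin n)) := ⟨⟨fun _ => c, continuous_const⟩⟩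
  set Yinf := ContractingWith.fixedPoint (Φ^[N]) hΦN with hY
  have hfixN : Φ^[N] Yinf = Yinf := hΦN.fixedPoint_isFixedPt
  have hfix : Φ Yinf = Yinf := by
    have h1 : Φ^[N] (Φ Yinf) = Φ Yinf := by
      rw [← Function.iterate_succ_apply, Function.iterate_succ_apply', hfixN]
    exact hΦN.fixedPoint_unique h1
  have hconv : Tendsto (fun k => (Φ^[N])^[k] (Φ^[0] Yinf)) atTop (𝓝 Yinf) := by
    exact hΦN.tendsto_iterate_fixedPoint _
  -- the restriction of X to the interval
  have hXcont : Continuous fun t : Icc (0:ℝ) T' => X t := hXc.restrict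
  set Xc : C(Icc (0:ℝ) T', EuclideanSpace ℝ (Fin n)) := ⟨fun t => X t, hXcont⟩ with hXcdef
  set F' : ℝ → EuclideanSpace ℝ (Fin n) := fun s => f (IccExtend hT'0 Xc s) (u s) with hF'
  set G' : ℝ → EuclideanSpace ℝ (Fin n) := fun s => g (IccExtend hT'0 Xc s) (u s) with hG'
  have hXeq' : ∀ t ∈ Icc (0:ℝ) T', X t = x₀ + ∫ s in (0:ℝ)..t, F' s := by
    intro t ht
    rw [hXeq t ht]
    congr 1
    refine integral_congr fun s hs => ?_
    have hs' : s ∈ Icc (0:ℝ) T' := by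
      rw [uIcc_of_le ht.1] at hs
      exact ⟨hs.1, hs.2.trans ht.2⟩
    rw [hF']
    simp only []
    rw [IccExtend_of_mem hT'0 Xc hs']
    rfl
  have hT'mem' : T' ∈ Icc (0:ℝ) T' := ⟨hT'0, le_refl _⟩
  -- base difference bound
  have base : ∀ t : Icc (0:ℝ) T', ‖Φ Xc t - Xc t‖ ≤ ε * (T' - (t:ℝ)) := by
    intro t
    have hdiff : Φ Xc t - Xc t = ∫ s in T'..(t:ℝ), (G' s - F' s) := by
      have h1 : Φ Xc t = c + ∫ s in T'..(t:ℝ), G' s := by rw [hΦ]; rfl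
      have adj : (∫ s in (0:ℝ)..T', F' s) + ∫ s in T'..(t:ℝ), F' s =
          ∫ s in (0:ℝ)..(t:ℝ), F' s :=
        integral_add_adjacent_intervals (intF f hfc _ (extCont Xc) 0 T')
          (intF f hfc _ (extCont Xc) T' (t:ℝ))
      rw [integral_sub (intF g hgc _ (extCont Xc) T' (t:ℝ)) (intF f hfc _ (extCont Xc) T' (t:ℝ)),
        h1, show Xc t = X (t:ℝ) from rfl, hXeq' (t:ℝ) t.2, hc, hXeq' T' hT'mem', ← adj]
      abel
    rw [hdiff]
    have hb := intervalIntegral.norm_integral_le_of_norm_le_const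
      (C := ε) (f := fun s => G' s - F' s) (a := T') (b := (t:ℝ)) ?_
    · refine hb.trans (le_of_eq ?_)
      rw [abs_sub_comm, abs_of_nonneg (sub_nonneg.2 t.2.2)]
    · intro s _
      rw [hG', hF']
      simp only []
      rw [norm_sub_rev]
      exact hfg _ (u s) (huU s)
  -- iterated difference bound
  have diffk : ∀ (k : ℕ) (t : Icc (0:ℝ) T'),
      ‖(Φ^[k+1] Xc) t - (Φ^[k] Xc) t‖ ≤
        ε * L ^ k * (T' - (t:ℝ)) ^ (k+1) / (Nat.factorial (k+1) : ℝ) := by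
    intro k
    induction k with
    | zero =>
      intro t
      simpa using base t
    | succ k ih =>
      intro t
      have h := step (Φ^[k+1] Xc) (Φ^[k] Xc) (k+1) (ε * L ^ k) (by positivity) ih t
      rw [← Function.iterate_succ_apply' Φ (k+1) Xc, ← Function.iterate_succ_apply' Φ k Xc] at h
      refine h.trans (le_of_eq ?_)
      rw [pow_succ]; ring
  set t0 : Icc (0:ℝ) T' := ⟨0, h0mem⟩ with ht0
  have sumbound : ∀ Mx : ℕ,
      dist (Xc t0) ((Φ^[Mx] Xc) t0) ≤ ε / L * (Real.exp (L * T') - 1) := by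
    intro Mx
    have hLT' : (0:ℝ) ≤ L * T' := by positivity
    calc dist (Xc t0) ((Φ^[Mx] Xc) t0) ≤
        ∑ k ∈ Finset.range Mx, dist ((Φ^[k] Xc) t0) ((Φ^[k+1] Xc) t0) :=
          dist_le_range_sum_dist (fun k => (Φ^[k] Xc) t0) Mx
      _ ≤ ∑ k ∈ Finset.range Mx, ε / L * ((L * T') ^ (k+1) / (Nat.factorial (k+1) : ℝ)) := by
          refine Finset.sum_le_sum fun k _ => ?_
          rw [dist_eq_norm, norm_sub_rev]
          refine (diffk k t0).trans (le_of_eq ?_)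
          have h0 : ((t0 : Icc (0:ℝ) T') : ℝ) = 0 := rfl
          rw [h0, sub_zero, mul_pow]
          have hfk : ((Nat.factorial (k+1) : ℝ)) ≠ 0 := by positivity
          field_simp
          ring
      _ = ε / L * ∑ k ∈ Finset.range Mx, (L * T') ^ (k+1) / (Nat.factorial (k+1) : ℝ) := by
          rw [Finset.mul_sum]
      _ ≤ ε / L * (Real.exp (L * T') - 1) := by
          refine mul_le_mul_of_nonneg_left ?_ (by positivity)
          have h1 : ∑ k ∈ Finset.range Mx, (L * T') ^ (k+1) / (Nat.factorial (k+1) : ℝ) =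
              (∑ j ∈ Finset.range (Mx+1), (L * T') ^ j / (Nat.factorial j : ℝ)) - 1 := by
            rw [Finset.sum_range_succ']
            simp
          rw [h1]
          have h2 := Real.sum_le_exp_of_nonneg hLT' (Mx+1)
          linarith
  have hconv0 : Tendsto (fun k => dist (Xc t0) (((Φ^[N])^[k] Xc) t0)) atTop
      (𝓝 (dist (Xc t0) (Yinf t0))) := by
    have hcont : Continuous fun Y : C(Icc (0:ℝ) T', EuclideanSpace ℝ (Fin n)) =>
        dist (Xc t0) (Y t0) :=
      continuous_const.dist (continuous_eval_const t0)
    exact (hcont.tendsto Yinf).comp (hΦN.tendsto_iterate_fixedPoint Xc)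
  have hle : dist (Xc t0) (Yinf t0) ≤ ε / L * (Real.exp (L * T') - 1) := by
    refine le_of_tendsto hconv0 (Eventually.of_forall fun k => ?_)
    have hit : (Φ^[N])^[k] Xc = Φ^[N * k] Xc := by rw [Function.iterate_mul]
    rw [hit]
    exact sumbound (N * k)
  -- the fixed point satisfies the integral equation
  have hfixt : ∀ t : Icc (0:ℝ) T',
      Yinf t = c + ∫ s in T'..(t:ℝ), g (IccExtend hT'0 Yinf s) (u s) := by
    intro t
    have h := ContinuousMap.congr_fun hfix t
    rw [hΦ] at h
    exact h.symm
  refine ⟨Yinf t0, ?_, ?_⟩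
  · refine ⟨T', hT'mem, u, hu, huU, IccExtend hT'0 Yinf, (extCont Yinf).continuousOn, ?_, ?_⟩
    · intro t ht
      rw [IccExtend_of_mem hT'0 Yinf ht, hfixt ⟨t, ht⟩, hfixt t0]
      have h0 : ((t0 : Icc (0:ℝ) T') : ℝ) = 0 := rfl
      rw [h0]
      have adj := integral_add_adjacent_intervals (intF g hgc _ (extCont Yinf) T' 0)
        (intF g hgc _ (extCont Yinf) 0 t)
      rw [← adj, add_assoc]
    · rw [IccExtend_of_mem hT'0 Yinf hT'mem', hfixt ⟨T', hT'mem'⟩]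
      simpa [integral_same] using hXTf
  · have hX0 : Xc t0 = x₀ := by
      have h := hXeq' 0 h0mem
      rw [integral_same] at h
      have h2 : Xc t0 = X 0 := rfl
      rw [h2, h, add_zero]
    have hTT : Real.exp (L * T') ≤ Real.exp (L * T) :=
      Real.exp_le_exp.2 (mul_le_mul_of_nonneg_left hT'mem.2 hL.le)
    calc dist x₀ (Yinf t0) = dist (Xc t0) (Yinf t0) := by rw [hX0]
      _ ≤ ε / L * (Real.exp (L * T') - 1) := hle
      _ ≤ ε / L * (Real.exp (L * T) - 1) := by
          refine mul_le_mul_of_nonneg_left (by linarith) (by positivity)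



/-- The Hausdorff distance between the controllable domains in time `≤ T` of two dynamics
that are `L`-Lipschitz in the state (uniformly in the control) and `ε`-close on `ℝⁿ × U`
is at most `(ε / L)(e^{L T} - 1)`. -/
theorem hausdorffDist_ctrlDomain_le {n m : ℕ} (U : Set (EuclideanSpace ℝ (Fin m)))
    (hU : IsCompact U) (T L ε : ℝ) (hT : 0 < T) (hL : 0 < L) (hε : 0 ≤ ε)
    (Tf : Set (EuclideanSpace ℝ (Fin n))) (hTf : Tf.Nonempty)
    (f g : EuclideanSpace ℝ (Fin n) → EuclideanSpace ℝ (Fin m) → EuclideanSpace ℝ (Fin n))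
    (hfc : Continuous fun p : EuclideanSpace ℝ (Fin n) × EuclideanSpace ℝ (Fin m) =>
      f p.1 p.2)
    (hgc : Continuous fun p : EuclideanSpace ℝ (Fin n) × EuclideanSpace ℝ (Fin m) =>
      g p.1 p.2)
    (hfLip : ∀ (x y : EuclideanSpace ℝ (Fin n)) (u : EuclideanSpace ℝ (Fin m)),
      ‖f x u - f y u‖ ≤ L * ‖x - y‖)
    (hgLip : ∀ (x y : EuclideanSpace ℝ (Fin n)) (u : EuclideanSpace ℝ (Fin m)),
      ‖g x u - g y u‖ ≤ L * ‖x - y‖)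
    (hfg : ∀ (x : EuclideanSpace ℝ (Fin n)), ∀ u ∈ U, ‖f x u - g x u‖ ≤ ε) :
    Metric.hausdorffDist (ctrlDomainWithin n m U T Tf f) (ctrlDomainWithin n m U T Tf g) ≤
      ε / L * (Real.exp (L * T) - 1) := by
  have hr : (0:ℝ) ≤ ε / L * (Real.exp (L * T) - 1) := by
    have h1 : (1:ℝ) ≤ Real.exp (L * T) := Real.one_le_exp (by positivity)
    have := div_nonneg hε hL.le
    nlinarith
  refine Metric.hausdorffDist_le_of_mem_dist hr ?_ ?_
  · intro x hx
    exact exists_close_mem_ctrlDomain U hU T L ε hL hε Tf f g hfc hgc hgLip hfg x hx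
  · intro x hx
    obtain ⟨y, hy, hd⟩ := exists_close_mem_ctrlDomain U hU T L ε hL hε Tf g f hgc hfc hfLip
      (fun x v hv => by rw [norm_sub_rev]; exact hfg x v hv) x hx
    exact ⟨y, hy, hd⟩
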